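/- Fix integers ξ ≥ 1 and n ≥ 1. For p ≥ 0 let C_p be the free abelian group on the set of admissible orderings of the multiset {0^ξ, 1^ξ, …, p^ξ}, let f_i: C_p → C_{p−1} (0 ≤ i ≤ p) be the map that deletes all occurrences of i from a sequence and subtracts 1 from every entry greater than i, let d = Σ_{j=0}^{p} (−1)^j f_j: C_p → C_{p−1}, and let D: C_p → C_{p+1} be the map that adds 1 to every entry of a sequence and prepends ξ zeros. Then D∘d + d∘D = id on C_p for 0 ≤ p ≤ n − ξ. -/

import Mathlib

/-! ## Admissible orderings of the multiset `{0^ξ, …, p^ξ}` and the chain complex of the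
quotient of the fern complex -/

/-- A list of natural numbers is an admissible ordering of the multiset `{0^ξ, …, p^ξ}` if
it has length `(p+1)·ξ`, every value `v ≤ p` occurs exactly `ξ` times, no other value
occurs, and for `i < j` the first occurrence of `i` precedes the first occurrence of `j`. -/
def AdmissibleList (ξ p : ℕ) (l : List ℕ) : Prop :=
  l.length = (p + 1) * ξ ∧
  (∀ v, v ≤ p → l.count v = ξ) ∧
  (∀ v ∈ l, v ≤ p) ∧
  ∀ i j, i < j → j ≤ p → l.idxOf i < l.idxOf j

/-- Deletion of all occurrences of the value `i`, shifting all larger values down by one: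
the `i`-th face map on orderings. -/
def faceList (i : ℕ) (l : List ℕ) : List ℕ :=
  (l.filter (fun v => v ≠ i)).map (fun v => if i < v then v - 1 else v)

/-- Prepending `ξ` zeroes after shifting all values up by one: the degeneracy-style
operator `D` on orderings. -/
def upList (ξ : ℕ) (l : List ℕ) : List ℕ :=
  List.replicate ξ 0 ++ l.map (· + 1)

/-- The `i`-th face map on the free abelian group on orderings. -/
noncomputable def faceMap (i : ℕ) : (List ℕ →₀ ℤ) →ₗ[ℤ] (List ℕ →₀ ℤ) :=
  Finsupp.lmapDomain ℤ ℤ (faceList i)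

/-- The boundary map `d = Σ_{j=0}^{p} (−1)^j f_j` out of degree-`p` chains. -/
noncomputable def boundaryMap (p : ℕ) : (List ℕ →₀ ℤ) →ₗ[ℤ] (List ℕ →₀ ℤ) :=
  ∑ i ∈ Finset.range (p + 1), ((-1 : ℤ) ^ i) • faceMap i

/-- The operator `D` on the free abelian group on orderings. -/
noncomputable def upMap (ξ : ℕ) : (List ℕ →₀ ℤ) →ₗ[ℤ] (List ℕ →₀ ℤ) :=
  Finsupp.lmapDomain ℤ ℤ (upList ξ)

/-- `C_p`: the free abelian group on the admissible orderings of `{0^ξ, …, p^ξ}`, realised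
as the span of the corresponding basis vectors inside the free abelian group on all lists. -/
noncomputable def admSpan (ξ p : ℕ) : Submodule ℤ (List ℕ →₀ ℤ) :=
  Submodule.span ℤ ((fun l => Finsupp.single l (1 : ℤ)) '' {l | AdmissibleList ξ p l})


lemma faceList_upList_zero (ξ : ℕ) (l : List ℕ) : faceList 0 (upList ξ l) = l := by
  simp only [faceList, upList, List.filter_append, List.filter_map, List.map_append,
    List.map_map]
  rw [List.filter_eq_nil_iff.mpr (by simp)]
  rw [List.filter_eq_self.mpr (by simp)]
  have : ((fun v => if 0 < v then v - 1 else v) ∘ fun x => x + 1) = id := by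
    ext v; simp
  rw [this, List.map_id]
  simp

lemma faceList_upList_succ (ξ i : ℕ) (l : List ℕ) :
    faceList (i + 1) (upList ξ l) = upList ξ (faceList i l) := by
  simp only [faceList, upList, List.filter_append, List.filter_map, List.map_append,
    List.map_map]
  rw [List.filter_eq_self.mpr (by simp)]
  congr 1
  · simp
  · congr 1
    · ext v : 1
      simp only [Function.comp_apply]
      split_ifs with h h1 h1 <;> omega
    · congr 1
      ext v
      simp

theorem chain_nullhomotopy_aux (ξ p : ℕ) (x : List ℕ →₀ ℤ) :
    upMap ξ (boundaryMap p x) + boundaryMap (p + 1) (upMap ξ x) = x := by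
  suffices h : ((upMap ξ).comp (boundaryMap p) + (boundaryMap (p+1)).comp (upMap ξ))
      = LinearMap.id by
    have := LinearMap.congr_fun h x
    simpa using this
  apply Finsupp.lhom_ext
  intro l b
  simp only [LinearMap.add_apply, LinearMap.comp_apply, LinearMap.id_apply,
    boundaryMap, LinearMap.sum_apply, LinearMap.smul_apply, upMap, faceMap,
    Finsupp.lmapDomain_apply, Finsupp.mapDomain_single, map_sum, map_smul,
    Finsupp.mapDomain_smul]
  rw [Finset.sum_range_succ'
    (fun i => ((-1:ℤ))^i • Finsupp.single (faceList i (upList ξ l)) b) (p+1)]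
  simp only [faceList_upList_succ, faceList_upList_zero, pow_zero, one_smul]
  have hneg : ∀ i : ℕ, ((-1:ℤ))^(i+1) • Finsupp.single (upList ξ (faceList i l)) b
      = -(((-1:ℤ))^i • Finsupp.single (upList ξ (faceList i l)) b) := by
    intro i; rw [pow_succ, mul_neg_one, neg_smul]
  simp only [hneg, Finset.sum_neg_distrib]
  abel

/-! ## Statement 12

Fix `ξ ≥ 1` and `n ≥ 1`.  On the free abelian groups `C_p` on the admissible orderings of
the multiset `{0^ξ, …, p^ξ}` (realised as spans `admSpan ξ p` inside the free abelian group
on all lists of naturals), with `d = Σ_{j=0}^{p} (−1)^j f_j` the alternating sum of the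
face (deletion) maps and `D` the prepend-`ξ`-zeroes map, one has `D∘d + d∘D = id` on `C_p`
for `0 ≤ p ≤ n − ξ`. -/
theorem chain_nullhomotopy (ξ n : ℕ) (hξ : 1 ≤ ξ) (hn : 1 ≤ n) (p : ℕ) (hp : p ≤ n - ξ)
    (x : List ℕ →₀ ℤ) (hx : x ∈ admSpan ξ p) :
    upMap ξ (boundaryMap p x) + boundaryMap (p + 1) (upMap ξ x) = x := by
  exact chain_nullhomotopy_aux ξ p x
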